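/- Let m ≥ 1, ε > 0, and let X be a nonempty finite set of points of ℝ^m. For x ∈ X define ρ_x : U(X,ε) → ℝ by ρ_x(p) := max(ε − ‖p − x‖, 0), and define g : U(X,ε) → ℝ^m by g(p) := (Σ_{x∈X} ρ_x(p))⁻¹ · Σ_{x∈X} ρ_x(p)·x. Then: (a) Σ_{x∈X} ρ_x(p) > 0 for every p ∈ U(X,ε), so g is a well-defined continuous map; (b) g(p) ∈ U(X,ε) for all p ∈ U(X,ε); (c) for every p ∈ U(X,ε) and every t ∈ [0,1], the point (1−t)p + t·g(p) lies in U(X,ε); consequently g, regarded as a continuous self-map of U(X,ε), is homotopic to the identity of U(X,ε) via the linear homotopy (p,t) ↦ (1−t)p + t·g(p). (Core of the proof of the Explicit Homological Nerve Theorem, Theorem 5.4.) -/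

import Mathlib

open Metric unitInterval

/-- The bump function `ρ_x(p) = max(ε - ‖p - x‖, 0)`. -/
noncomputable def rhoFn (m : ℕ) (ε : ℝ) (x p : EuclideanSpace ℝ (Fin m)) : ℝ :=
  max (ε - ‖p - x‖) 0

/-- The map `g(p) = (Σ_{x∈X} ρ_x(p))⁻¹ • Σ_{x∈X} ρ_x(p) • x`. -/
noncomputable def gFn (m : ℕ) (ε : ℝ) (X : Finset (EuclideanSpace ℝ (Fin m)))
    (p : EuclideanSpace ℝ (Fin m)) : EuclideanSpace ℝ (Fin m) :=
  (∑ x ∈ X, rhoFn m ε x p)⁻¹ • ∑ x ∈ X, rhoFn m ε x p • x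

/-- The open `ε`-neighborhood `U(X, ε) = ⋃ x ∈ X, B(x, ε)`. -/
def nbhdU (m : ℕ) (ε : ℝ) (X : Finset (EuclideanSpace ℝ (Fin m))) :
    Set (EuclideanSpace ℝ (Fin m)) :=
  ⋃ x ∈ X, Metric.ball x ε

lemma rho_nonneg (m : ℕ) (ε : ℝ) (x p : EuclideanSpace ℝ (Fin m)) :
    0 ≤ rhoFn m ε x p := le_max_right _ _

lemma mem_nbhdU_iff {m : ℕ} {ε : ℝ} {X : Finset (EuclideanSpace ℝ (Fin m))}
    {p : EuclideanSpace ℝ (Fin m)} :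
    p ∈ nbhdU m ε X ↔ ∃ x ∈ X, ‖p - x‖ < ε := by
  simp [nbhdU, Metric.mem_ball, dist_eq_norm]

lemma sum_rho_pos {m : ℕ} {ε : ℝ} {X : Finset (EuclideanSpace ℝ (Fin m))}
    {p : EuclideanSpace ℝ (Fin m)} (hp : p ∈ nbhdU m ε X) :
    0 < ∑ x ∈ X, rhoFn m ε x p := by
  obtain ⟨x, hxX, hx⟩ := mem_nbhdU_iff.mp hp
  exact Finset.sum_pos' (fun y _ => rho_nonneg m ε y p)
    ⟨x, hxX, lt_max_of_lt_left (by linarith)⟩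

lemma rho_pos_norm_lt {m : ℕ} {ε : ℝ} {x p : EuclideanSpace ℝ (Fin m)}
    (h : 0 < rhoFn m ε x p) : ‖p - x‖ < ε := by
  by_contra hc
  push_neg at hc
  have : rhoFn m ε x p = 0 := max_eq_right (by linarith)
  linarith

/-- Parallel-axis: `Σ ρ ‖b-x‖² ≤ Σ ρ ‖p-x‖²` when `b` is the ρ-barycenter. -/
lemma barycenter_ineq {m : ℕ} (X : Finset (EuclideanSpace ℝ (Fin m)))
    (ρ : EuclideanSpace ℝ (Fin m) → ℝ) (p b : EuclideanSpace ℝ (Fin m))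
    (hρ : ∀ x ∈ X, 0 ≤ ρ x) (hb : ∑ x ∈ X, ρ x • (b - x) = 0) :
    ∑ x ∈ X, ρ x * ‖b - x‖ ^ 2 ≤ ∑ x ∈ X, ρ x * ‖p - x‖ ^ 2 := by
  have key : ∀ x ∈ X, ρ x * ‖p - x‖ ^ 2 =
      ρ x * ‖p - b‖ ^ 2 + 2 * (inner ℝ (p - b) (ρ x • (b - x)) : ℝ) + ρ x * ‖b - x‖ ^ 2 := by
    intro x _
    have hdecomp : p - x = (p - b) + (b - x) := by abel
    rw [hdecomp, norm_add_sq_real, real_inner_smul_right]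
    ring
  rw [Finset.sum_congr rfl key]
  simp only [Finset.sum_add_distrib]
  have h2 : ∑ x ∈ X, 2 * (inner ℝ (p - b) (ρ x • (b - x)) : ℝ) = 0 := by
    rw [← Finset.mul_sum, ← inner_sum, hb, inner_zero_right, mul_zero]
  rw [h2]
  have : 0 ≤ ∑ x ∈ X, ρ x * ‖p - b‖ ^ 2 := by
    exact Finset.sum_nonneg fun x hx => mul_nonneg (hρ x hx) (sq_nonneg _)
  linarith

/-- The whole segment from `p` to `g(p)` stays in `U(X, ε)`. -/
lemma segment_mem {m : ℕ} {ε : ℝ} (hε : 0 < ε) {X : Finset (EuclideanSpace ℝ (Fin m))}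
    {p : EuclideanSpace ℝ (Fin m)} (hp : p ∈ nbhdU m ε X) {t : ℝ}
    (ht : t ∈ Set.Icc (0 : ℝ) 1) :
    (1 - t) • p + t • gFn m ε X p ∈ nbhdU m ε X := by
  set ρ : EuclideanSpace ℝ (Fin m) → ℝ := fun x => rhoFn m ε x p with hρdef
  have hρ : ∀ x ∈ X, 0 ≤ ρ x := fun x _ => rho_nonneg m ε x p
  set S : ℝ := ∑ x ∈ X, ρ x with hS
  have hSpos : 0 < S := sum_rho_pos hp
  set b : EuclideanSpace ℝ (Fin m) := gFn m ε X p with hbdef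
  have hSb : S • b = ∑ x ∈ X, ρ x • x := by
    rw [hbdef, gFn, smul_inv_smul₀ hSpos.ne']
  have hb0 : ∑ x ∈ X, ρ x • (b - x) = 0 := by
    simp only [smul_sub]
    rw [Finset.sum_sub_distrib, ← Finset.sum_smul, ← hS, hSb, sub_self]
  have hkey : ∑ x ∈ X, ρ x * ‖b - x‖ ^ 2 ≤ ∑ x ∈ X, ρ x * ‖p - x‖ ^ 2 :=
    barycenter_ineq X ρ p b hρ hb0
  -- `Σ ρ ‖p-x‖² < S ε²`
  have hlt : ∑ x ∈ X, ρ x * ‖p - x‖ ^ 2 < S * ε ^ 2 := by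
    rw [hS, Finset.sum_mul]
    obtain ⟨x₀, hx₀X, hx₀⟩ := mem_nbhdU_iff.mp hp
    refine Finset.sum_lt_sum (fun x hx => ?_) ⟨x₀, hx₀X, ?_⟩
    · rcases eq_or_lt_of_le (hρ x hx) with h | h
      · rw [← h]; simp
      · have := rho_pos_norm_lt h
        exact mul_le_mul_of_nonneg_left
          (pow_le_pow_left₀ (norm_nonneg _) this.le 2) (hρ x hx)
    · have hρ₀ : 0 < ρ x₀ := lt_max_of_lt_left (by linarith)
      exact mul_lt_mul_of_pos_left
        (pow_lt_pow_left₀ hx₀ (norm_nonneg _) two_ne_zero) hρ₀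
  set q : EuclideanSpace ℝ (Fin m) := (1 - t) • p + t • b with hq
  -- convexity bound on each term
  have hqbound : ∀ x ∈ X, ρ x * ‖q - x‖ ^ 2 ≤
      ρ x * ((1 - t) * ‖p - x‖ ^ 2 + t * ‖b - x‖ ^ 2) := by
    intro x hx
    have hqx : q - x = (1 - t) • (p - x) + t • (b - x) := by
      rw [hq]; module
    have h1 : ‖q - x‖ ≤ (1 - t) * ‖p - x‖ + t * ‖b - x‖ := by
      rw [hqx]
      refine (norm_add_le _ _).trans ?_
      rw [norm_smul, norm_smul, Real.norm_eq_abs, Real.norm_eq_abs,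
        abs_of_nonneg (by linarith [ht.2] : (0:ℝ) ≤ 1 - t), abs_of_nonneg ht.1]
    refine mul_le_mul_of_nonneg_left ?_ (hρ x hx)
    have h2 : ‖q - x‖ ^ 2 ≤ ((1 - t) * ‖p - x‖ + t * ‖b - x‖) ^ 2 :=
      pow_le_pow_left₀ (norm_nonneg _) h1 2
    have h1t : (0:ℝ) ≤ 1 - t := by linarith [ht.2]
    nlinarith [h2, mul_nonneg (mul_nonneg ht.1 h1t) (sq_nonneg (‖p - x‖ - ‖b - x‖))]
  have hqsum : ∑ x ∈ X, ρ x * ‖q - x‖ ^ 2 < S * ε ^ 2 := by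
    calc ∑ x ∈ X, ρ x * ‖q - x‖ ^ 2
        ≤ ∑ x ∈ X, ρ x * ((1 - t) * ‖p - x‖ ^ 2 + t * ‖b - x‖ ^ 2) :=
          Finset.sum_le_sum hqbound
      _ = (1 - t) * ∑ x ∈ X, ρ x * ‖p - x‖ ^ 2 + t * ∑ x ∈ X, ρ x * ‖b - x‖ ^ 2 := by
          rw [Finset.mul_sum, Finset.mul_sum, ← Finset.sum_add_distrib]
          exact Finset.sum_congr rfl fun x _ => by ring
      _ ≤ (1 - t) * ∑ x ∈ X, ρ x * ‖p - x‖ ^ 2 + t * ∑ x ∈ X, ρ x * ‖p - x‖ ^ 2 := by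
          have := mul_le_mul_of_nonneg_left hkey ht.1
          linarith
      _ = ∑ x ∈ X, ρ x * ‖p - x‖ ^ 2 := by ring
      _ < S * ε ^ 2 := hlt
  -- conclude: some `x` with `‖q - x‖ < ε`
  rw [mem_nbhdU_iff]
  by_contra hc
  push_neg at hc
  have : S * ε ^ 2 ≤ ∑ x ∈ X, ρ x * ‖q - x‖ ^ 2 := by
    rw [hS, Finset.sum_mul]
    refine Finset.sum_le_sum fun x hx => ?_
    exact mul_le_mul_of_nonneg_left
      (pow_le_pow_left₀ hε.le (hc x hx) 2) (hρ x hx)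
  linarith

lemma sum_rho_continuous (m : ℕ) (ε : ℝ) (X : Finset (EuclideanSpace ℝ (Fin m))) :
    Continuous fun p => ∑ x ∈ X, rhoFn m ε x p := by
  refine continuous_finset_sum _ fun x _ => ?_
  exact ((continuous_const.sub ((continuous_id.sub continuous_const).norm)).max
    continuous_const)

lemma gFn_continuousOn (m : ℕ) (ε : ℝ) (X : Finset (EuclideanSpace ℝ (Fin m))) :
    ContinuousOn (gFn m ε X) (nbhdU m ε X) := by
  have hS := sum_rho_continuous m ε X
  have hinv : ContinuousOn (fun p => (∑ x ∈ X, rhoFn m ε x p)⁻¹) (nbhdU m ε X) :=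
    ContinuousOn.inv₀ hS.continuousOn fun p hp => (sum_rho_pos hp).ne'
  have hvec : Continuous fun p => ∑ x ∈ X, rhoFn m ε x p • x := by
    refine continuous_finset_sum _ fun x _ => ?_
    exact ((continuous_const.sub ((continuous_id.sub continuous_const).norm)).max
      continuous_const).smul continuous_const
  exact hinv.smul hvec.continuousOn

theorem gFn_selfmap_homotopic_id'
    (m : ℕ) (hm : 1 ≤ m) (ε : ℝ) (hε : 0 < ε)
    (X : Finset (EuclideanSpace ℝ (Fin m))) (hX : X.Nonempty) :
    (∀ p ∈ nbhdU m ε X, 0 < ∑ x ∈ X, rhoFn m ε x p) ∧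
    ContinuousOn (gFn m ε X) (nbhdU m ε X) ∧
    (∀ p ∈ nbhdU m ε X, gFn m ε X p ∈ nbhdU m ε X) ∧
    (∀ p ∈ nbhdU m ε X, ∀ t ∈ Set.Icc (0 : ℝ) 1,
      (1 - t) • p + t • gFn m ε X p ∈ nbhdU m ε X) ∧
    ∃ G : C(↥(nbhdU m ε X), ↥(nbhdU m ε X)),
      (∀ p : ↥(nbhdU m ε X), (G p : EuclideanSpace ℝ (Fin m)) = gFn m ε X p) ∧
      ∃ H : (ContinuousMap.id ↥(nbhdU m ε X)).Homotopy G,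
        ∀ (t : I) (p : ↥(nbhdU m ε X)),
          (H (t, p) : EuclideanSpace ℝ (Fin m)) =
            (1 - (t : ℝ)) • (p : EuclideanSpace ℝ (Fin m)) +
              (t : ℝ) • gFn m ε X (p : EuclideanSpace ℝ (Fin m)) := by
  have hgc := gFn_continuousOn m ε X
  have hmaps : ∀ p ∈ nbhdU m ε X, gFn m ε X p ∈ nbhdU m ε X := by
    intro p hp
    have := segment_mem hε hp (t := 1) (by norm_num)
    simpa using this
  refine ⟨fun p hp => sum_rho_pos hp, hgc, hmaps,
    fun p hp t ht => segment_mem hε hp ht, ?_⟩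
  have hgrest : Continuous ((nbhdU m ε X).restrict (gFn m ε X)) :=
    hgc.restrict
  refine ⟨⟨fun p => ⟨gFn m ε X p, hmaps p p.2⟩, ?_⟩, fun p => rfl, ?_⟩
  · exact Continuous.subtype_mk hgrest _
  · refine ⟨⟨⟨fun q => ⟨(1 - (q.1 : ℝ)) • (q.2 : EuclideanSpace ℝ (Fin m)) +
        (q.1 : ℝ) • gFn m ε X (q.2 : EuclideanSpace ℝ (Fin m)),
        segment_mem hε q.2.2 q.1.2⟩, ?_⟩, ?_, ?_⟩, fun t p => rfl⟩
    · refine Continuous.subtype_mk ?_ _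
      have ht : Continuous fun q : I × ↥(nbhdU m ε X) => (q.1 : ℝ) :=
        continuous_subtype_val.comp continuous_fst
      have hp : Continuous fun q : I × ↥(nbhdU m ε X) =>
          (q.2 : EuclideanSpace ℝ (Fin m)) :=
        continuous_subtype_val.comp continuous_snd
      have hg : Continuous fun q : I × ↥(nbhdU m ε X) =>
          gFn m ε X (q.2 : EuclideanSpace ℝ (Fin m)) :=
        hgrest.comp continuous_snd
      exact ((continuous_const.sub ht).smul hp).add (ht.smul hg)
    · intro p
      ext1
      simp
    · intro p
      ext1
      simp
      rfl

/-- core of the proof of Theorem 5.4.  Let `m ≥ 1`, `ε > 0`, and let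
`X ⊆ ℝ^m` be a nonempty finite set.  With `ρ_x(p) = max(ε - ‖p - x‖, 0)` and
`g(p) = (Σ ρ_x(p))⁻¹ • Σ ρ_x(p) • x` one has:
(a) `Σ_{x∈X} ρ_x(p) > 0` on `U(X, ε)`, and `g` is continuous on `U(X, ε)`;
(b) `g` maps `U(X, ε)` into itself;
(c) for every `p ∈ U(X, ε)` and `t ∈ [0,1]`, the point `(1-t)p + t g(p)` lies in
`U(X, ε)`; consequently `g`, as a continuous self-map of `U(X, ε)`, is homotopic to the
identity via the linear homotopy `(p, t) ↦ (1-t)p + t g(p)`. -/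
theorem gFn_selfmap_homotopic_id
    (m : ℕ) (hm : 1 ≤ m) (ε : ℝ) (hε : 0 < ε)
    (X : Finset (EuclideanSpace ℝ (Fin m))) (hX : X.Nonempty) :
    (∀ p ∈ nbhdU m ε X, 0 < ∑ x ∈ X, rhoFn m ε x p) ∧
    ContinuousOn (gFn m ε X) (nbhdU m ε X) ∧
    (∀ p ∈ nbhdU m ε X, gFn m ε X p ∈ nbhdU m ε X) ∧
    (∀ p ∈ nbhdU m ε X, ∀ t ∈ Set.Icc (0 : ℝ) 1,
      (1 - t) • p + t • gFn m ε X p ∈ nbhdU m ε X) ∧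
    ∃ G : C(↥(nbhdU m ε X), ↥(nbhdU m ε X)),
      (∀ p : ↥(nbhdU m ε X), (G p : EuclideanSpace ℝ (Fin m)) = gFn m ε X p) ∧
      ∃ H : (ContinuousMap.id ↥(nbhdU m ε X)).Homotopy G,
        ∀ (t : I) (p : ↥(nbhdU m ε X)),
          (H (t, p) : EuclideanSpace ℝ (Fin m)) =
            (1 - (t : ℝ)) • (p : EuclideanSpace ℝ (Fin m)) +
              (t : ℝ) • gFn m ε X (p : EuclideanSpace ℝ (Fin m)) :=
  gFn_selfmap_homotopic_id' m hm ε hε X hX
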